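/- Let g : [0, r) → ℝ be C², with g(0) = 0, g'(0) = 1 (so g(y) = y + R(y) with R(y) = O(y²)), and g(y) > 0 for y > 0. Define h(x) = −1/ln x for x ∈ (0, 1) with h(0) = 0, and H = h⁻¹ ∘ g ∘ h, i.e. H(x) = exp(−1/g(−1/ln x)) for x ∈ (0,1), H(0) = 0. Then H is differentiable at 0 with H'(0⁺) = lim_{x→0⁺} H'(x) = e^(g''(0)/2), and H is C¹ on [0, x₀) for small x₀. -/

import Mathlib

open Filter Set Real Topology
set_option maxHeartbeats 1000000

theorem stmt_11 (g : ℝ → ℝ) (r : ℝ) (hr : 0 < r)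
    (hg : ContDiff ℝ 2 g) (hg0 : g 0 = 0) (hg'0 : deriv g 0 = 1)
    (hgpos : ∀ y ∈ Set.Ioo (0 : ℝ) r, 0 < g y)
    (H : ℝ → ℝ)
    (hH : ∀ x : ℝ, H x = if 0 < x ∧ x < 1 then Real.exp (-(g (-(Real.log x)⁻¹))⁻¹) else 0) :
    ∃ x₀ > 0, ContDiffOn ℝ 1 H (Set.Ico 0 x₀) ∧
      HasDerivWithinAt H (Real.exp (iteratedDeriv 2 g 0 / 2)) (Set.Ici 0) 0 ∧
      Tendsto (deriv H) (nhdsWithin 0 (Set.Ioi 0))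
        (nhds (Real.exp (iteratedDeriv 2 g 0 / 2))) := by
  have hgd : Differentiable ℝ g := hg.differentiable two_ne_zero
  have hdg1 : ContDiff ℝ 1 (deriv g) := by
    have h := (contDiff_succ_iff_deriv (n := 1) (f := g) (𝕜 := ℝ))
    norm_num at h
    exact (h.mp hg).2
  have hdgd : Differentiable ℝ (deriv g) := hdg1.differentiable one_ne_zero
  have hdgc : Continuous (deriv g) := hdg1.continuous
  have hL2 : iteratedDeriv 2 g 0 = deriv (deriv g) 0 := by
    rw [show (2:ℕ) = 1 + 1 from rfl, iteratedDeriv_succ, iteratedDeriv_one]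
  set L := iteratedDeriv 2 g 0 with hLdef
  -- slope of deriv g at 0
  have hslope2 : Tendsto (fun t => (deriv g t - 1) / t) (𝓝[>] (0:ℝ)) (𝓝 L) := by
    have h := hasDerivAt_iff_tendsto_slope.mp (hdgd 0).hasDerivAt
    rw [← hL2] at h
    have h' := h.mono_left (nhdsWithin_mono 0 (fun t (ht : t ∈ Ioi (0:ℝ)) => ne_of_gt ht))
    refine h'.congr (fun t => ?_)
    rw [slope_def_field, hg'0, sub_zero]
  have l1 : Tendsto (fun t => (g t - t) / t ^ 2) (𝓝[>] (0:ℝ)) (𝓝 (L / 2)) := by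
    apply deriv.lhopital_zero_nhdsGT
    · exact Eventually.of_forall fun t => (hgd t).sub differentiable_id.differentiableAt
    · filter_upwards [self_mem_nhdsWithin] with t (ht : t ∈ Ioi (0:ℝ))
      have ht0 : (0:ℝ) < t := ht
      rw [deriv_pow_field]
      norm_num
      positivity
    · have : Tendsto (fun t => g t - t) (𝓝 (0:ℝ)) (𝓝 (g 0 - 0)) :=
        ((hgd.continuous.sub continuous_id).tendsto 0)
      rw [hg0, sub_zero] at this
      exact this.mono_left nhdsWithin_le_nhds
    · have : Tendsto (fun t : ℝ => t ^ 2) (𝓝 (0:ℝ)) (𝓝 ((0:ℝ) ^ 2)) :=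
        (continuous_pow 2).tendsto 0
      norm_num at this
      exact this.mono_left nhdsWithin_le_nhds
    · have h2 := hslope2.div_const 2
      refine h2.congr' ?_
      filter_upwards [self_mem_nhdsWithin] with t (ht : t ∈ Ioi (0:ℝ))
      have ht' : t ≠ 0 := ne_of_gt ht
      have hd : deriv (fun t => g t - t) t = deriv g t - 1 := by
        have := ((hgd t).hasDerivAt.sub (hasDerivAt_id' (x := t))).deriv
        exact this
      have hd2 : deriv (fun t : ℝ => t ^ 2) t = 2 * t := by
        rw [deriv_pow_field]; norm_num
      rw [hd, hd2]
      ring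
  have l2 : Tendsto (fun t => g t / t) (𝓝[>] (0:ℝ)) (𝓝 1) := by
    have h := hasDerivAt_iff_tendsto_slope.mp (hgd 0).hasDerivAt
    rw [hg'0] at h
    have h' := h.mono_left (nhdsWithin_mono 0 (fun t (ht : t ∈ Ioi (0:ℝ)) => ne_of_gt ht))
    refine h'.congr (fun t => ?_)
    rw [slope_def_field, hg0, sub_zero, sub_zero]
  have l3 : Tendsto (fun t => t / g t) (𝓝[>] (0:ℝ)) (𝓝 1) := by
    have := l2.inv₀ one_ne_zero
    norm_num at this
    exact this
  have l5 : Tendsto (deriv g) (𝓝[>] (0:ℝ)) (𝓝 1) := by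
    have := hdgc.tendsto 0
    rw [hg'0] at this
    exact this.mono_left nhdsWithin_le_nhds
  have l4 : Tendsto (fun t => t⁻¹ - (g t)⁻¹) (𝓝[>] (0:ℝ)) (𝓝 (L / 2)) := by
    have h := l1.mul l3
    norm_num at h
    refine h.congr' ?_
    filter_upwards [Ioo_mem_nhdsGT hr] with t ht
    have ht0 : t ≠ 0 := ne_of_gt ht.1
    have hgt : g t ≠ 0 := ne_of_gt (hgpos t ht)
    field_simp
  -- the conjugate function in the chart and limits of it
  set G : ℝ → ℝ := fun t => Real.exp (t⁻¹ - (g t)⁻¹) * deriv g t * (t / g t) ^ 2 with hGdef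
  have lexp : Tendsto (fun t => Real.exp (t⁻¹ - (g t)⁻¹)) (𝓝[>] (0:ℝ))
      (𝓝 (Real.exp (L / 2))) := (Real.continuous_exp.tendsto _).comp l4
  have eG : Tendsto G (𝓝[>] (0:ℝ)) (𝓝 (Real.exp (L / 2))) := by
    have := (lexp.mul l5).mul (l3.pow 2)
    norm_num at this
    exact this
  -- the chart x ↦ -1/log x
  set yf : ℝ → ℝ := fun x => -(Real.log x)⁻¹ with hyf
  have tendsto_y : Tendsto yf (𝓝[>] (0:ℝ)) (𝓝[>] (0:ℝ)) := by
    rw [tendsto_nhdsWithin_iff]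
    constructor
    · have h0 : Tendsto (fun x => -Real.log x) (𝓝[>] (0:ℝ)) atTop :=
        tendsto_neg_atBot_atTop.comp Real.tendsto_log_nhdsGT_zero
      have h1 := h0.inv_tendsto_atTop
      refine h1.congr fun x => ?_
      show (-Real.log x)⁻¹ = -(Real.log x)⁻¹
      rw [inv_neg]
    · filter_upwards [Ioo_mem_nhdsGT one_pos] with x hx
      have hlog : Real.log x < 0 := Real.log_neg hx.1 hx.2
      exact neg_pos.mpr (inv_lt_zero.mpr hlog)
  -- choice of x₀
  set x₀ : ℝ := Real.exp (-r⁻¹) with hx₀def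
  have hx₀pos : 0 < x₀ := Real.exp_pos _
  have hx₀lt1 : x₀ < 1 := Real.exp_lt_one_iff.mpr (neg_lt_zero.mpr (inv_pos.mpr hr))
  -- basic facts for x ∈ Ioo 0 x₀
  have hfacts : ∀ x ∈ Ioo (0:ℝ) x₀, Real.log x < 0 ∧ yf x ∈ Ioo (0:ℝ) r := by
    intro x hx
    have hlog : Real.log x < -r⁻¹ := by
      have := Real.log_lt_log hx.1 hx.2
      rwa [Real.log_exp] at this
    have hrinv : (0:ℝ) < r⁻¹ := inv_pos.mpr hr
    have hlogneg : Real.log x < 0 := by linarith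
    refine ⟨hlogneg, neg_pos.mpr (inv_lt_zero.mpr hlogneg), ?_⟩
    have h1 : r⁻¹ < -Real.log x := by linarith
    have h2 : (-Real.log x)⁻¹ < (r⁻¹)⁻¹ := inv_strictAnti₀ hrinv h1
    rw [inv_inv] at h2
    have : yf x = (-Real.log x)⁻¹ := by rw [hyf]; simp [inv_neg]
    rw [this]
    exact h2
  -- H equals the explicit formula near every x ∈ Ioo 0 x₀
  have hHeq : ∀ x ∈ Ioo (0:ℝ) x₀, H x = Real.exp (-(g (yf x))⁻¹) := by
    intro x hx
    rw [hH x, if_pos ⟨hx.1, lt_trans hx.2 hx₀lt1⟩]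
  -- derivative formula
  set D : ℝ → ℝ := fun x => Real.exp (-(g (yf x))⁻¹) *
      (deriv g (yf x) * (x⁻¹ / (Real.log x) ^ 2) / (g (yf x)) ^ 2) with hDdef
  have keyD : ∀ x ∈ Ioo (0:ℝ) x₀, HasDerivAt H (D x) x := by
    intro x hx
    obtain ⟨hlogneg, hyx⟩ := hfacts x hx
    have hx0 : x ≠ 0 := ne_of_gt hx.1
    have hlogne : Real.log x ≠ 0 := ne_of_lt hlogneg
    have hgy : 0 < g (yf x) := hgpos _ hyx
    have d1 : HasDerivAt Real.log x⁻¹ x := Real.hasDerivAt_log hx0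
    have d2 : HasDerivAt (fun x => (Real.log x)⁻¹) (-x⁻¹ / (Real.log x) ^ 2) x :=
      d1.inv hlogne
    have d3 : HasDerivAt yf (x⁻¹ / (Real.log x) ^ 2) x := by
      have := d2.neg
      rw [neg_div, neg_neg] at this
      exact this
    have d4 : HasDerivAt (fun x => g (yf x))
        (deriv g (yf x) * (x⁻¹ / (Real.log x) ^ 2)) x :=
      ((hgd (yf x)).hasDerivAt).comp x d3
    have d5 : HasDerivAt (fun x => (g (yf x))⁻¹)
        (-(deriv g (yf x) * (x⁻¹ / (Real.log x) ^ 2)) / (g (yf x)) ^ 2) x :=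
      d4.inv (ne_of_gt hgy)
    have d6 : HasDerivAt (fun x => -(g (yf x))⁻¹)
        (deriv g (yf x) * (x⁻¹ / (Real.log x) ^ 2) / (g (yf x)) ^ 2) x := by
      have := d5.neg
      rw [neg_div, neg_neg] at this
      exact this
    have d7 := d6.exp
    refine d7.congr_of_eventuallyEq ?_
    filter_upwards [isOpen_Ioo.mem_nhds hx] with z hz
    exact hHeq z hz
  -- identify D with G ∘ yf on Ioo 0 x₀
  have hDG : ∀ x ∈ Ioo (0:ℝ) x₀, D x = G (yf x) := by
    intro x hx
    obtain ⟨hlogneg, hyx⟩ := hfacts x hx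
    have hx0 : x ≠ 0 := ne_of_gt hx.1
    have hlogne : Real.log x ≠ 0 := ne_of_lt hlogneg
    have hgy : g (yf x) ≠ 0 := ne_of_gt (hgpos _ hyx)
    have hyinv : (yf x)⁻¹ = -Real.log x := by rw [hyf]; simp [inv_neg]
    have hexpx : Real.exp ((yf x)⁻¹ - (g (yf x))⁻¹) = x⁻¹ * Real.exp (-(g (yf x))⁻¹) := by
      rw [hyinv, sub_eq_add_neg, Real.exp_add]
      congr 1
      rw [Real.exp_neg, Real.exp_log hx.1]
    show Real.exp (-(g (yf x))⁻¹) * (deriv g (yf x) * (x⁻¹ / (Real.log x) ^ 2) / (g (yf x)) ^ 2)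
      = Real.exp ((yf x)⁻¹ - (g (yf x))⁻¹) * deriv g (yf x) * (yf x / g (yf x)) ^ 2
    rw [hexpx]
    have hyval : yf x = -(Real.log x)⁻¹ := rfl
    rw [hyval]
    have hgy' : g (-(Real.log x)⁻¹) ≠ 0 := hgy
    have hdg' : True := trivial
    field_simp
  -- limit of H x / x
  have TQ : Tendsto (fun x => H x / x) (𝓝[>] (0:ℝ)) (𝓝 (Real.exp (L / 2))) := by
    have h := lexp.comp tendsto_y
    refine h.congr' ?_
    filter_upwards [Ioo_mem_nhdsGT hx₀pos] with x hx
    obtain ⟨hlogneg, hyx⟩ := hfacts x hx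
    have hyinv : (yf x)⁻¹ = -Real.log x := by rw [hyf]; simp [inv_neg]
    have hx0 : x ≠ 0 := ne_of_gt hx.1
    show Real.exp ((yf x)⁻¹ - (g (yf x))⁻¹) = H x / x
    rw [hHeq x hx, eq_div_iff hx0]
    have hsp : (yf x)⁻¹ - (g (yf x))⁻¹ = -(g (yf x))⁻¹ + -Real.log x := by rw [hyinv]; ring
    rw [hsp, Real.exp_add]
    rw [show Real.exp (-Real.log x) = x⁻¹ from by rw [Real.exp_neg, Real.exp_log hx.1]]
    rw [mul_assoc, inv_mul_cancel₀ hx0, mul_one]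
  -- derivative at 0 from the right
  have hH0 : H 0 = 0 := by rw [hH 0]; norm_num
  have hDW : HasDerivWithinAt H (Real.exp (L / 2)) (Set.Ici 0) 0 := by
    rw [hasDerivWithinAt_iff_tendsto_slope]
    rw [show Set.Ici (0:ℝ) \ {0} = Set.Ioi 0 from Set.Ici_sdiff_left]
    refine TQ.congr fun x => ?_
    rw [slope_def_field, hH0, sub_zero, sub_zero]
  -- limit of deriv H
  have TD : Tendsto (deriv H) (𝓝[>] (0:ℝ)) (𝓝 (Real.exp (L / 2))) := by
    have h := eG.comp tendsto_y
    refine h.congr' ?_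
    filter_upwards [Ioo_mem_nhdsGT hx₀pos] with x hx
    rw [Function.comp_apply, ← hDG x hx, (keyD x hx).deriv]
  -- assemble
  refine ⟨x₀, hx₀pos, ?_, hDW, TD⟩
  -- ContDiffOn
  have hUD : UniqueDiffOn ℝ (Set.Ico (0:ℝ) x₀) := uniqueDiffOn_Ico 0 x₀
  have hDWIco : HasDerivWithinAt H (Real.exp (L / 2)) (Set.Ico 0 x₀) 0 :=
    hDW.mono Set.Ico_subset_Ici_self
  have hdiffOn : DifferentiableOn ℝ H (Set.Ico 0 x₀) := by
    intro x hx
    rcases eq_or_lt_of_le hx.1 with h0 | h0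
    · rw [← h0]
      exact hDWIco.differentiableWithinAt
    · exact (keyD x ⟨h0, hx.2⟩).differentiableAt.differentiableWithinAt
  have hdW0 : derivWithin H (Set.Ico 0 x₀) 0 = Real.exp (L / 2) :=
    hDWIco.derivWithin (hUD 0 ⟨le_refl 0, hx₀pos⟩)
  have hdWeq : ∀ x ∈ Ioo (0:ℝ) x₀, derivWithin H (Set.Ico 0 x₀) x = deriv H x := by
    intro x hx
    exact derivWithin_of_mem_nhds
      (Filter.mem_of_superset (isOpen_Ioo.mem_nhds hx) Set.Ioo_subset_Ico_self)
  have hcont : ContinuousOn (derivWithin H (Set.Ico 0 x₀)) (Set.Ico 0 x₀) := by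
    intro x hx
    rcases eq_or_lt_of_le hx.1 with h0 | h0
    · rw [← h0]
      rw [← continuousWithinAt_diff_self]
      unfold ContinuousWithinAt
      rw [hdW0]
      have hsub : Set.Ico (0:ℝ) x₀ \ {0} ⊆ Set.Ioi 0 := by
        rintro z ⟨hz1, hz2⟩
        exact lt_of_le_of_ne hz1.1 (Ne.symm hz2)
      refine Tendsto.mono_left ?_ (nhdsWithin_mono 0 hsub)
      refine TD.congr' ?_
      filter_upwards [Ioo_mem_nhdsGT hx₀pos] with z hz
      exact (hdWeq z hz).symm
    · have hxIoo : x ∈ Ioo (0:ℝ) x₀ := ⟨h0, hx.2⟩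
      obtain ⟨hlogneg, hyx⟩ := hfacts x hxIoo
      have hx0 : x ≠ 0 := ne_of_gt h0
      have hlogne : Real.log x ≠ 0 := ne_of_lt hlogneg
      have hgy : g (yf x) ≠ 0 := ne_of_gt (hgpos _ hyx)
      have cy : ContinuousAt yf x :=
        ((Real.continuousAt_log hx0).inv₀ hlogne).neg
      have cgy : ContinuousAt (fun x => g (yf x)) x :=
        (hgd.continuous.continuousAt).comp cy
      have c1 : ContinuousAt (fun x => Real.exp (-(g (yf x))⁻¹)) x :=
        Real.continuous_exp.continuousAt.comp ((cgy.inv₀ hgy).neg)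
      have c2 : ContinuousAt (fun x => deriv g (yf x)) x :=
        hdgc.continuousAt.comp cy
      have c3 : ContinuousAt (fun x : ℝ => x⁻¹ / (Real.log x) ^ 2) x :=
        (continuousAt_id.inv₀ hx0).div ((Real.continuousAt_log hx0).pow 2)
          (pow_ne_zero 2 hlogne)
      have c4 : ContinuousAt D x :=
        c1.mul ((c2.mul c3).div (cgy.pow 2) (pow_ne_zero 2 hgy))
      have hDH : D =ᶠ[𝓝 x] derivWithin H (Set.Ico 0 x₀) := by
        filter_upwards [isOpen_Ioo.mem_nhds hxIoo] with z hz
        rw [hdWeq z hz, (keyD z hz).deriv]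
      exact (c4.congr hDH).continuousWithinAt
  rw [show (1 : WithTop ℕ∞) = 0 + 1 by norm_num, contDiffOn_succ_iff_derivWithin hUD]
  refine ⟨hdiffOn, ?_, contDiffOn_zero.mpr hcont⟩
  intro h
  simp at h
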